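/- Let σ : ℝ → ℝ be C² with σ'(v) > 0 everywhere, σ''(v) < 0 for v < 0 and σ''(v) > 0 for v > 0. Let v_l < 0 < v_r and s > 0 satisfy s² = (σ(v_r) - σ(v_l))/(v_r - v_l), and define h(v) := -s²v + σ(v) - a where a := -s²v_l + σ(v_l) (so h(v_l) = h(v_r) = 0). If σ'(v_r) ≤ s², then h(v) > 0 for all v ∈ (v_l, v_r). -/

import Mathlib

open Real Set

theorem stmt_1 (σ : ℝ → ℝ) (v_l v_r s a : ℝ) (h : ℝ → ℝ)
    (hσ : ContDiff ℝ 2 σ) (hσ' : ∀ v, deriv σ v > 0)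
    (hσ''neg : ∀ v < 0, iteratedDeriv 2 σ v < 0)
    (hσ''pos : ∀ v > 0, iteratedDeriv 2 σ v > 0)
    (hvl : v_l < 0) (hvr : 0 < v_r) (hs : s > 0)
    (hspeed : s ^ 2 = (σ v_r - σ v_l) / (v_r - v_l))
    (ha : a = -s ^ 2 * v_l + σ v_l)
    (hh : ∀ v, h v = -s ^ 2 * v + σ v - a)
    (hLax : deriv σ v_r ≤ s ^ 2) :
    ∀ v ∈ Ioo v_l v_r, h v > 0 := by
  have hσd : Differentiable ℝ σ := hσ.differentiable (by norm_num)
  have hσ2 : ContDiff ℝ ((1 : ℕ∞) + 1) σ := by exact_mod_cast hσ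
  have h2 : ContDiff ℝ 1 (deriv σ) := (contDiff_succ_iff_deriv.mp hσ2).2.2
  have hσd' : Differentiable ℝ (deriv σ) := h2.differentiable (by norm_num)
  have hit : iteratedDeriv 2 σ = deriv (deriv σ) := by
    rw [show (2 : ℕ) = 1 + 1 from rfl, iteratedDeriv_succ, iteratedDeriv_one]
  have hdh : ∀ x, HasDerivAt h (deriv σ x - s ^ 2) x := by
    intro x
    have hfun : h = fun v => -s ^ 2 * v + σ v - a := funext hh
    rw [hfun]
    have h1 : HasDerivAt (fun v : ℝ => -s ^ 2 * v + σ v - a)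
        (-s ^ 2 * 1 + deriv σ x) x :=
      (((hasDerivAt_id x).const_mul (-s ^ 2)).add (hσd x).hasDerivAt).sub_const a
    convert h1 using 1
    ring
  have hderiv : deriv h = fun x => deriv σ x - s ^ 2 := funext fun x => (hdh x).deriv
  have hcont : Continuous h := by
    have hfun : h = fun v => -s ^ 2 * v + σ v - a := funext hh
    rw [hfun]
    exact ((continuous_const.mul continuous_id).add hσ.continuous).sub continuous_const
  have hs2 : s ^ 2 * (v_r - v_l) = σ v_r - σ v_l := by
    rw [hspeed, div_mul_cancel₀ _ (sub_ne_zero.mpr (by linarith : v_r ≠ v_l))]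
  have hl : h v_l = 0 := by rw [hh, ha]; ring
  have hr : h v_r = 0 := by
    rw [hh, ha]; ring_nf; ring_nf at hs2; linarith
  -- σ' strictly increasing on [0, v_r]
  have hmono : StrictMonoOn (deriv σ) (Icc 0 v_r) := by
    apply strictMonoOn_of_deriv_pos (convex_Icc _ _) h2.continuous.continuousOn
    intro x hx
    rw [interior_Icc] at hx
    have := hσ''pos x hx.1
    rwa [hit] at this
  -- h strictly decreasing on [0, v_r]
  have hanti : StrictAntiOn h (Icc 0 v_r) := by
    apply strictAntiOn_of_deriv_neg (convex_Icc _ _) hcont.continuousOn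
    intro x hx
    rw [interior_Icc] at hx
    rw [hderiv]
    have hlt : deriv σ x < deriv σ v_r :=
      hmono ⟨hx.1.le, hx.2.le⟩ ⟨hvr.le, le_rfl⟩ hx.2
    simp only
    linarith
  have h0pos : 0 < h 0 := by
    have := hanti ⟨le_rfl, hvr.le⟩ ⟨hvr.le, le_rfl⟩ hvr
    linarith [hr ▸ this]
  -- h strictly concave on [v_l, 0]
  have hconc : StrictConcaveOn ℝ (Icc v_l 0) h := by
    apply strictConcaveOn_of_deriv2_neg (convex_Icc _ _) hcont.continuousOn
    intro x hx
    rw [interior_Icc] at hx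
    show deriv (deriv h) x < 0
    have hdd : deriv (deriv h) x = iteratedDeriv 2 σ x := by
      rw [hderiv, hit]
      exact deriv_sub_const _
    rw [hdd]
    exact hσ''neg x hx.2
  intro v hv
  rcases lt_trichotomy v 0 with hv0 | hv0 | hv0
  · -- v ∈ (v_l, 0): concavity argument
    set t : ℝ := v / v_l with ht
    have hvlne : v_l ≠ 0 := ne_of_lt hvl
    have ht0 : 0 < t := div_pos_iff.mpr (Or.inr ⟨hv0, hvl⟩)
    have ht1 : t < 1 := by
      have h1 : (v - v_l) / v_l < 0 := div_neg_of_pos_of_neg (by linarith [hv.1]) hvl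
      have h2 : t - 1 = (v - v_l) / v_l := by rw [ht, div_sub_one hvlne]
      linarith
    have hb : 0 < 1 - t := by linarith
    have hcomb := hconc.2 (x := v_l) (y := 0)
      ⟨le_rfl, hvl.le⟩ ⟨hvl.le, le_rfl⟩ hvlne ht0 hb (by ring)
    have heq : t • v_l + (1 - t) • (0 : ℝ) = v := by
      simp [ht]
      field_simp
    rw [heq] at hcomb
    have : t • h v_l + (1 - t) • h 0 = (1 - t) * h 0 := by
      rw [hl]; simp
    rw [this] at hcomb
    have : 0 < (1 - t) * h 0 := mul_pos hb h0pos
    linarith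
  · subst hv0; exact h0pos
  · -- v ∈ (0, v_r)
    have := hanti ⟨hv0.le, hv.2.le⟩ ⟨hvr.le, le_rfl⟩ hv.2
    linarith [hr ▸ this]
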